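/- For every fixed h > 0, the function A(ε) = 2ε²h·e^{3ε²h²}·(e^{4ε²h²} − 1 − 4ε²h²) / (e^{8ε²h²} − 1 − 8ε²h²·e^{4ε²h²}), defined for ε > 0, tends to 3/(4h) as ε → 0⁺. -/

import Mathlib

open Filter Topology Real

noncomputable def f0 (x : ℝ) : ℝ := x * (Real.exp x - 1 - x)
noncomputable def g0 (x : ℝ) : ℝ := Real.exp (2*x) - 1 - 2*x*Real.exp x
noncomputable def f1 (x : ℝ) : ℝ := Real.exp x + x*Real.exp x - 1 - 2*x
noncomputable def g1 (x : ℝ) : ℝ := 2*Real.exp (2*x) - 2*Real.exp x - 2*x*Real.exp x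
noncomputable def f2 (x : ℝ) : ℝ := 2*Real.exp x + x*Real.exp x - 2
noncomputable def g2 (x : ℝ) : ℝ := 4*Real.exp (2*x) - 4*Real.exp x - 2*x*Real.exp x
noncomputable def f3 (x : ℝ) : ℝ := 3*Real.exp x + x*Real.exp x
noncomputable def g3 (x : ℝ) : ℝ := 8*Real.exp (2*x) - 6*Real.exp x - 2*x*Real.exp x

lemma hasDerivAt_exp2 (x : ℝ) : HasDerivAt (fun x : ℝ => Real.exp (2*x)) (2*Real.exp (2*x)) x := by
  have := ((hasDerivAt_id x).const_mul 2).exp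
  refine this.congr_deriv ?_; simp only [id_eq]; ring

lemma hDf0 (x : ℝ) : HasDerivAt f0 (f1 x) x := by
  have := (hasDerivAt_id x).mul (((Real.hasDerivAt_exp x).sub_const 1).sub (hasDerivAt_id x))
  refine this.congr_deriv ?_; unfold f1; simp only [id_eq, Pi.sub_apply]; ring

lemma hDg0 (x : ℝ) : HasDerivAt g0 (g1 x) x := by
  have := ((hasDerivAt_exp2 x).sub_const 1).sub
    (((hasDerivAt_id x).const_mul 2).mul (Real.hasDerivAt_exp x))
  refine this.congr_deriv ?_; unfold g1; simp only [id_eq, Pi.sub_apply]; ring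

lemma hDf1 (x : ℝ) : HasDerivAt f1 (f2 x) x := by
  have := (((Real.hasDerivAt_exp x).add ((hasDerivAt_id x).mul (Real.hasDerivAt_exp x))).sub_const 1).sub
    ((hasDerivAt_id x).const_mul 2)
  refine this.congr_deriv ?_; unfold f2; simp only [id_eq, Pi.sub_apply]; ring

lemma hDg1 (x : ℝ) : HasDerivAt g1 (g2 x) x := by
  have := (((hasDerivAt_exp2 x).const_mul 2).sub ((Real.hasDerivAt_exp x).const_mul 2)).sub
    (((hasDerivAt_id x).const_mul 2).mul (Real.hasDerivAt_exp x))
  refine this.congr_deriv ?_; unfold g2; simp only [id_eq, Pi.sub_apply]; ring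

lemma hDf2 (x : ℝ) : HasDerivAt f2 (f3 x) x := by
  have := (((Real.hasDerivAt_exp x).const_mul 2).add ((hasDerivAt_id x).mul (Real.hasDerivAt_exp x))).sub_const 2
  refine this.congr_deriv ?_; unfold f3; simp only [id_eq, Pi.sub_apply]; ring

lemma hDg2 (x : ℝ) : HasDerivAt g2 (g3 x) x := by
  have := (((hasDerivAt_exp2 x).const_mul 4).sub ((Real.hasDerivAt_exp x).const_mul 4)).sub
    (((hasDerivAt_id x).const_mul 2).mul (Real.hasDerivAt_exp x))
  refine this.congr_deriv ?_; unfold g3; simp only [id_eq, Pi.sub_apply]; ring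

lemma key_div : Tendsto (fun x => f0 x / g0 x) (𝓝[>] (0:ℝ)) (𝓝 (3/2)) := by
  have hpos : ∀ᶠ x in 𝓝[>] (0:ℝ), (0:ℝ) < x := self_mem_nhdsWithin
  have hg1 : ∀ᶠ x in 𝓝[>] (0:ℝ), g1 x ≠ 0 := by
    filter_upwards [hpos] with x hx
    have h1 : Real.exp (2*x) = Real.exp x * Real.exp x := by
      rw [two_mul, Real.exp_add]
    have h2 : 1 + x < Real.exp x := by
      have := Real.add_one_lt_exp (ne_of_gt hx); linarith
    have h3 : (0:ℝ) < Real.exp x := Real.exp_pos x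
    have : 0 < g1 x := by unfold g1; nlinarith
    exact ne_of_gt this
  have hg2 : ∀ᶠ x in 𝓝[>] (0:ℝ), g2 x ≠ 0 := by
    filter_upwards [hpos] with x hx
    have h1 : Real.exp (2*x) = Real.exp x * Real.exp x := by
      rw [two_mul, Real.exp_add]
    have h2 : 1 + x < Real.exp x := by
      have := Real.add_one_lt_exp (ne_of_gt hx); linarith
    have h3 : (0:ℝ) < Real.exp x := Real.exp_pos x
    have : 0 < g2 x := by unfold g2; nlinarith
    exact ne_of_gt this
  have hg3 : ∀ᶠ x in 𝓝[>] (0:ℝ), g3 x ≠ 0 := by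
    filter_upwards [hpos] with x hx
    have h1 : Real.exp (2*x) = Real.exp x * Real.exp x := by
      rw [two_mul, Real.exp_add]
    have h2 : 1 + x < Real.exp x := by
      have := Real.add_one_lt_exp (ne_of_gt hx); linarith
    have h3 : (0:ℝ) < Real.exp x := Real.exp_pos x
    have : 0 < g3 x := by unfold g3; nlinarith
    exact ne_of_gt this
  have cf0 : Continuous f0 := by unfold f0; fun_prop
  have cg0 : Continuous g0 := by unfold g0; fun_prop
  have cf1 : Continuous f1 := by unfold f1; fun_prop
  have cg1 : Continuous g1 := by unfold g1; fun_prop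
  have cf2 : Continuous f2 := by unfold f2; fun_prop
  have cg2 : Continuous g2 := by unfold g2; fun_prop
  have z : ∀ (F : ℝ → ℝ), Continuous F → F 0 = 0 → Tendsto F (𝓝[>] (0:ℝ)) (𝓝 0) := by
    intro F hF h0
    simpa [h0] using (hF.tendsto 0).mono_left nhdsWithin_le_nhds
  have hdiv3 : Tendsto (fun x => f3 x / g3 x) (𝓝[>] (0:ℝ)) (𝓝 (3/2)) := by
    have : ContinuousAt (fun x => f3 x / g3 x) 0 := by
      apply ContinuousAt.div
      · unfold f3; fun_prop
      · unfold g3; fun_prop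
      · unfold g3; norm_num
    have hv : f3 0 / g3 0 = 3/2 := by unfold f3 g3; norm_num
    rw [← hv]
    exact this.tendsto.mono_left nhdsWithin_le_nhds
  have hdiv2 : Tendsto (fun x => f2 x / g2 x) (𝓝[>] (0:ℝ)) (𝓝 (3/2)) :=
    HasDerivAt.lhopital_zero_nhdsGT (.of_forall hDf2) (.of_forall hDg2) hg3
      (z f2 cf2 (by unfold f2; norm_num)) (z g2 cg2 (by unfold g2; norm_num)) hdiv3
  have hdiv1 : Tendsto (fun x => f1 x / g1 x) (𝓝[>] (0:ℝ)) (𝓝 (3/2)) :=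
    HasDerivAt.lhopital_zero_nhdsGT (.of_forall hDf1) (.of_forall hDg1) hg2
      (z f1 cf1 (by unfold f1; norm_num)) (z g1 cg1 (by unfold g1; norm_num)) hdiv2
  exact HasDerivAt.lhopital_zero_nhdsGT (.of_forall hDf0) (.of_forall hDg0) hg1
    (z f0 cf0 (by unfold f0; norm_num)) (z g0 cg0 (by unfold g0; norm_num)) hdiv1

/-- In the flat limit ε → 0⁺, the fourth-order Gaussian RBF-HFD weight
`A(ε)` for function values converges to the compact FD weight `3/(4h)`. -/
theorem gaussian_rbf_hfd4_alpha_flat_limit (h : ℝ) (hh : 0 < h) :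
    Tendsto (fun ε : ℝ =>
      2 * ε ^ 2 * h * Real.exp (3 * ε ^ 2 * h ^ 2) *
        (Real.exp (4 * ε ^ 2 * h ^ 2) - 1 - 4 * ε ^ 2 * h ^ 2) /
        (Real.exp (8 * ε ^ 2 * h ^ 2) - 1 - 8 * ε ^ 2 * h ^ 2 * Real.exp (4 * ε ^ 2 * h ^ 2)))
      (𝓝[>] 0) (𝓝 (3 / (4 * h))) := by
  have hcomp : Tendsto (fun ε : ℝ => 4 * ε ^ 2 * h ^ 2) (𝓝[>] (0:ℝ)) (𝓝[>] (0:ℝ)) := by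
    apply tendsto_nhdsWithin_of_tendsto_nhds_of_eventually_within
    · have hc : Continuous (fun ε : ℝ => 4 * ε ^ 2 * h ^ 2) := by fun_prop
      simpa using (hc.tendsto 0).mono_left nhdsWithin_le_nhds
    · filter_upwards [self_mem_nhdsWithin] with x hx
      have hx' : (0:ℝ) < x := hx
      have : (0:ℝ) < 4 * x ^ 2 * h ^ 2 := by positivity
      exact this
  have key : Tendsto (fun x : ℝ => Real.exp (3 * x / 4) / (2*h) * (f0 x / g0 x))
      (𝓝[>] (0:ℝ)) (𝓝 (3 / (4*h))) := by
    have h1 : Tendsto (fun x : ℝ => Real.exp (3 * x / 4) / (2*h)) (𝓝[>] (0:ℝ)) (𝓝 (1/(2*h))) := by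
      have hc : Continuous (fun x : ℝ => Real.exp (3 * x / 4) / (2*h)) := by fun_prop
      simpa using (hc.tendsto 0).mono_left nhdsWithin_le_nhds
    have hmul := h1.mul key_div
    have hv : 1/(2*h) * (3/2) = 3 / (4*h) := by field_simp; ring
    rwa [hv] at hmul
  have hfinal := key.comp hcomp
  convert hfinal using 1
  funext ε
  simp only [Function.comp_apply, f0, g0]
  rw [show 3 * (4 * ε ^ 2 * h ^ 2) / 4 = 3 * ε ^ 2 * h ^ 2 by ring,
      show 2 * (4 * ε ^ 2 * h ^ 2) = 8 * ε ^ 2 * h ^ 2 by ring,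
      ← mul_div_assoc]
  congr 1
  field_simp
  ring
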